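/- Under the same setting, with ψ¹_{ε,t}(y) = e^{AW(t)}y + ε e^{AW(t)} ∫₀^t e^{−AW(s)} F(e^{AW(s)}y) ds, the first-order Taylor approximation error satisfies |φ_{ε,t}(y) − ψ¹_{ε,t}(y)| ≤ C(1+|y|) e^{Cεt} (εt)² for a constant C independent of ε and t. -/

import Mathlib

open MeasureTheory NormedSpace Set

/-- Matrix acting on a Euclidean vector. -/
noncomputable def matApply {d : ℕ} (M : Matrix (Fin d) (Fin d) ℝ)
    (x : EuclideanSpace ℝ (Fin d)) : EuclideanSpace ℝ (Fin d) :=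
  WithLp.toLp 2 (M.mulVec x)

noncomputable def matCLM {d : ℕ} (M : Matrix (Fin d) (Fin d) ℝ) :
    EuclideanSpace ℝ (Fin d) →L[ℝ] EuclideanSpace ℝ (Fin d) :=
  Matrix.toEuclideanCLM (𝕜 := ℝ) M

lemma matApply_eq_matCLM {d : ℕ} (M : Matrix (Fin d) (Fin d) ℝ)
    (x : EuclideanSpace ℝ (Fin d)) : matApply M x = matCLM M x := rfl

set_option maxHeartbeats 1000000 in
lemma matCLM_continuous {d : ℕ} : Continuous (matCLM (d := d)) := by
  let ℓ : Matrix (Fin d) (Fin d) ℝ →ₗ[ℝ]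
      (EuclideanSpace ℝ (Fin d) →L[ℝ] EuclideanSpace ℝ (Fin d)) :=
    { toFun := matCLM
      map_add' := fun a b => map_add (Matrix.toEuclideanCLM (𝕜 := ℝ)) a b
      map_smul' := fun c a => (Matrix.toEuclideanCLM (𝕜 := ℝ)).map_smul' c a }
  exact ℓ.continuous_of_finiteDimensional

lemma continuous_expMat {d : ℕ} (A : Matrix (Fin d) (Fin d) ℝ) {g : ℝ → ℝ}
    (hg : Continuous g) : Continuous fun s => exp (g s • A) := by
  letI : SeminormedRing (Matrix (Fin d) (Fin d) ℝ) := Matrix.linftyOpSemiNormedRing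
  letI : NormedRing (Matrix (Fin d) (Fin d) ℝ) := Matrix.linftyOpNormedRing
  letI : NormedAlgebra ℝ (Matrix (Fin d) (Fin d) ℝ) := Matrix.linftyOpNormedAlgebra
  letI : NormedAlgebra ℚ (Matrix (Fin d) (Fin d) ℝ) := Matrix.linftyOpNormedAlgebra
  exact exp_continuous.comp (hg.smul continuous_const)

lemma continuous_matApply_exp {d : ℕ} (A : Matrix (Fin d) (Fin d) ℝ)
    {g : ℝ → ℝ} {u : ℝ → EuclideanSpace ℝ (Fin d)}
    (hg : Continuous g) (hu : Continuous u) :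
    Continuous fun s => matApply (exp (g s • A)) (u s) := by
  have h1 : Continuous fun s => matCLM (exp (g s • A)) :=
    matCLM_continuous.comp (continuous_expMat A hg)
  have h : (fun s => matApply (exp (g s • A)) (u s)) =
      fun s => (matCLM (exp (g s • A))) (u s) := rfl
  rw [h]
  exact h1.clm_apply hu

lemma exp_matrix_bound {d : ℕ} (A : Matrix (Fin d) (Fin d) ℝ) (hA : exp A = 1) :
    ∃ B : ℝ, 1 ≤ B ∧ ∀ (c : ℝ) (x : EuclideanSpace ℝ (Fin d)),
      ‖matApply (exp (c • A)) x‖ ≤ B * ‖x‖ := by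
  have hcontM : Continuous fun c : ℝ => matCLM (exp (c • A)) :=
    matCLM_continuous.comp (continuous_expMat A continuous_id)
  have hper : Function.Periodic (fun c : ℝ => ‖matCLM (exp (c • A))‖) 1 := by
    intro c
    show ‖matCLM (exp ((c + 1) • A))‖ = ‖matCLM (exp (c • A))‖
    have hsmul : (c + 1) • A = c • A + A := by
      rw [add_smul, one_smul]
    rw [hsmul, Matrix.exp_add_of_commute _ _ ((Commute.refl A).smul_left c), hA, mul_one]
  obtain ⟨Cb, hCb⟩ := (isCompact_Icc (a := (0:ℝ)) (b := 1)).exists_bound_of_continuousOn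
    hcontM.continuousOn
  refine ⟨max Cb 1, le_max_right _ _, ?_⟩
  intro c x
  obtain ⟨c', hc', hcc'⟩ := hper.exists_mem_Ico₀ one_pos c
  have h1 : ‖matCLM (exp (c • A))‖ ≤ Cb := by
    have h2 := hCb c' (Ico_subset_Icc_self hc')
    calc ‖matCLM (exp (c • A))‖ = ‖matCLM (exp (c' • A))‖ := hcc'
      _ ≤ Cb := h2
  calc ‖matApply (exp (c • A)) x‖ = ‖(matCLM (exp (c • A))) x‖ := rfl
    _ ≤ ‖matCLM (exp (c • A))‖ * ‖x‖ := (matCLM _).le_opNorm x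
    _ ≤ max Cb 1 * ‖x‖ :=
        mul_le_mul_of_nonneg_right (h1.trans (le_max_left _ _)) (norm_nonneg _)

lemma exp_sub_one_le {x : ℝ} (hx : 0 ≤ x) : Real.exp x - 1 ≤ x * Real.exp x := by
  have h3 := mul_le_mul_of_nonneg_left (Real.add_one_le_exp (-x)) (Real.exp_pos x).le
  rw [← Real.exp_add] at h3
  simp only [add_neg_cancel, Real.exp_zero] at h3
  nlinarith

/-- First-order Taylor (in `ε`) approximation error: with
`ψ¹ t y = e^{A W(t)} y + ε e^{A W(t)} ∫₀ᵗ e^{−A W(s)} F(e^{A W(s)} y) ds`,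
one has `‖φ t y − ψ¹ t y‖ ≤ C (1 + ‖y‖) e^{C ε t} (ε t)²` with `C` independent of `ε`, `t`. -/
theorem first_order_taylor_error (d : ℕ)
    (A : Matrix (Fin d) (Fin d) ℝ) (hA : exp A = 1)
    (F : EuclideanSpace ℝ (Fin d) → EuclideanSpace ℝ (Fin d)) (L : ℝ)
    (hFlip : ∀ y₁ y₂, ‖F y₁ - F y₂‖ ≤ L * ‖y₁ - y₂‖)
    (hFgrowth : ∀ y, ‖F y‖ ≤ L * (1 + ‖y‖)) :
    ∃ C : ℝ, 0 < C ∧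
      ∀ (ε : ℝ), 0 < ε → ∀ (W : ℝ → ℝ), Continuous W →
        ∀ (φ : ℝ → EuclideanSpace ℝ (Fin d) → EuclideanSpace ℝ (Fin d)),
          (∀ y, Continuous fun s => φ s y) →
          (∀ (t : ℝ) (y : EuclideanSpace ℝ (Fin d)), 0 ≤ t →
            φ t y = matApply (exp (W t • A)) y +
              ε • ∫ s in (0 : ℝ)..t, matApply (exp ((W t - W s) • A)) (F (φ s y))) →
          ∀ (t : ℝ) (y : EuclideanSpace ℝ (Fin d)), 0 ≤ t →
            ‖φ t y -
              (matApply (exp (W t • A)) y +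
                ε • matApply (exp (W t • A))
                  (∫ s in (0 : ℝ)..t,
                    matApply (exp ((-W s) • A)) (F (matApply (exp (W s • A)) y))))‖ ≤
              C * (1 + ‖y‖) * Real.exp (C * ε * t) * (ε * t) ^ 2 := by
  obtain ⟨B, hB1, hB⟩ := exp_matrix_bound A hA
  have hB0 : (0:ℝ) < B := lt_of_lt_of_le one_pos hB1
  set L₁ : ℝ := max L 1 with hL₁def
  have hL₁ : (0:ℝ) < L₁ := lt_max_of_lt_right one_pos
  have hFlip' : ∀ y₁ y₂, ‖F y₁ - F y₂‖ ≤ L₁ * ‖y₁ - y₂‖ := fun y₁ y₂ =>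
    (hFlip y₁ y₂).trans (mul_le_mul_of_nonneg_right (le_max_left _ _) (norm_nonneg _))
  have hFg' : ∀ y, ‖F y‖ ≤ L₁ * (1 + ‖y‖) := fun y => (hFgrowth y).trans
    (mul_le_mul_of_nonneg_right (le_max_left _ _) (by positivity))
  have hFcont : Continuous F := by
    have hlip : LipschitzWith (Real.toNNReal L₁) F := by
      apply LipschitzWith.of_dist_le_mul
      intro y₁ y₂
      rw [dist_eq_norm, dist_eq_norm]
      calc ‖F y₁ - F y₂‖ ≤ L₁ * ‖y₁ - y₂‖ := hFlip' _ _
        _ = Real.toNNReal L₁ * ‖y₁ - y₂‖ := by rw [Real.coe_toNNReal _ hL₁.le]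
    exact hlip.continuous
  refine ⟨(B * L₁)^2 * (1 + B) + B * L₁, by positivity, ?_⟩
  intro ε hε W hW φ hφc hφeq t y ht
  have hZcont : Continuous fun s => matApply (exp (W s • A)) y :=
    continuous_matApply_exp A hW continuous_const
  set g : ℝ → ℝ := fun s => ‖φ s y - matApply (exp (W s • A)) y‖ with hgdef
  have hgcont : Continuous g := ((hφc y).sub hZcont).norm
  have hgnn : ∀ s, 0 ≤ g s := fun s => norm_nonneg _
  set K : ℝ := ε * (B * L₁) with hKdef
  have hKpos : 0 < K := by positivity
  set a : ℝ := K * (1 + B * ‖y‖) with hadef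
  have hapos : 0 < a := by
    have : (0:ℝ) < 1 + B * ‖y‖ := by positivity
    positivity
  -- bound on ‖F (φ r y)‖
  have hFφ : ∀ r, ‖F (φ r y)‖ ≤ L₁ * (1 + B * ‖y‖) + L₁ * g r := by
    intro r
    have hφn : ‖φ r y‖ ≤ B * ‖y‖ + g r := by
      have h1 : φ r y = matApply (exp (W r • A)) y + (φ r y - matApply (exp (W r • A)) y) := by
        abel
      calc ‖φ r y‖ = ‖matApply (exp (W r • A)) y + (φ r y - matApply (exp (W r • A)) y)‖ := by
            rw [← h1]
        _ ≤ ‖matApply (exp (W r • A)) y‖ + g r := norm_add_le _ _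
        _ ≤ B * ‖y‖ + g r := by gcongr; exact hB _ _
    calc ‖F (φ r y)‖ ≤ L₁ * (1 + ‖φ r y‖) := hFg' _
      _ ≤ L₁ * (1 + (B * ‖y‖ + g r)) := by gcongr
      _ = L₁ * (1 + B * ‖y‖) + L₁ * g r := by ring
  -- integral inequality for g
  have hgle : ∀ s, 0 ≤ s → g s ≤ a * s + K * ∫ r in (0:ℝ)..s, g r := by
    intro s hs
    have hIcont : Continuous fun r => matApply (exp ((W s - W r) • A)) (F (φ r y)) :=
      continuous_matApply_exp A (continuous_const.sub hW) (hFcont.comp (hφc y))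
    have hnormb : ∀ r, ‖matApply (exp ((W s - W r) • A)) (F (φ r y))‖ ≤
        B * L₁ * (1 + B * ‖y‖) + B * L₁ * g r := by
      intro r
      calc ‖matApply (exp ((W s - W r) • A)) (F (φ r y))‖ ≤ B * ‖F (φ r y)‖ := hB _ _
        _ ≤ B * (L₁ * (1 + B * ‖y‖) + L₁ * g r) := by gcongr; exact hFφ r
        _ = B * L₁ * (1 + B * ‖y‖) + B * L₁ * g r := by ring
    have heq : φ s y - matApply (exp (W s • A)) y =
        ε • ∫ r in (0:ℝ)..s, matApply (exp ((W s - W r) • A)) (F (φ r y)) := by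
      rw [hφeq s y hs]; abel
    calc g s = ε * ‖∫ r in (0:ℝ)..s, matApply (exp ((W s - W r) • A)) (F (φ r y))‖ := by
          simp only [hgdef]
          rw [heq, norm_smul, Real.norm_of_nonneg hε.le]
      _ ≤ ε * ∫ r in (0:ℝ)..s, ‖matApply (exp ((W s - W r) • A)) (F (φ r y))‖ :=
          mul_le_mul_of_nonneg_left
            (intervalIntegral.norm_integral_le_integral_norm hs) hε.le
      _ ≤ ε * ∫ r in (0:ℝ)..s, (B * L₁ * (1 + B * ‖y‖) + B * L₁ * g r) := by
          apply mul_le_mul_of_nonneg_left _ hε.le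
          apply intervalIntegral.integral_mono_on hs (hIcont.norm.intervalIntegrable _ _)
            ((continuous_const.add (continuous_const.mul hgcont)).intervalIntegrable _ _)
          intro r _
          exact hnormb r
      _ = ε * (B * L₁ * (1 + B * ‖y‖) * s + B * L₁ * ∫ r in (0:ℝ)..s, g r) := by
          rw [intervalIntegral.integral_add (f := fun _ => B * L₁ * (1 + B * ‖y‖))
            (g := fun r => B * L₁ * g r) (intervalIntegrable_const)
            ((continuous_const.mul hgcont).intervalIntegrable _ _),
            intervalIntegral.integral_const, intervalIntegral.integral_const_mul,
            smul_eq_mul, sub_zero]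
          ring
      _ = a * s + K * ∫ r in (0:ℝ)..s, g r := by rw [hadef, hKdef]; ring
  -- Gronwall
  set h : ℝ → ℝ := fun s => ∫ r in (0:ℝ)..s, g r with hhdef
  have hderiv : ∀ s, HasDerivAt h (g s) s := fun s =>
    intervalIntegral.integral_hasDerivAt_right (hgcont.intervalIntegrable _ _)
      (hgcont.stronglyMeasurableAtFilter _ _) hgcont.continuousAt
  have hhnn : ∀ s, 0 ≤ s → 0 ≤ h s := fun s hs =>
    intervalIntegral.integral_nonneg hs (fun r _ => hgnn r)
  have hgron : ∀ x ∈ Icc (0:ℝ) t, ‖h x‖ ≤ gronwallBound 0 K (a * t) (x - 0) := by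
    apply norm_le_gronwallBound_of_norm_deriv_right_le
      (fun s _ => (hderiv s).continuousAt.continuousWithinAt)
      (fun s _ => (hderiv s).hasDerivWithinAt)
    · simp [hhdef]
    · intro x hx
      rw [Real.norm_of_nonneg (hgnn x), Real.norm_of_nonneg (hhnn x hx.1)]
      calc g x ≤ a * x + K * h x := hgle x hx.1
        _ ≤ K * h x + a * t := by
            have : a * x ≤ a * t := by gcongr; exact hx.2.le
            linarith
  have hht : h t ≤ (1 + B * ‖y‖) * t * (Real.exp (K * t) - 1) := by
    have h2 := hgron t ⟨ht, le_refl t⟩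
    rw [Real.norm_of_nonneg (hhnn t ht), gronwallBound_of_K_ne_0 hKpos.ne'] at h2
    calc h t ≤ 0 * Real.exp (K * (t - 0)) + a * t / K * (Real.exp (K * (t - 0)) - 1) := h2
      _ = (1 + B * ‖y‖) * t * (Real.exp (K * t) - 1) := by
          rw [sub_zero]
          have haK : a * t / K = (1 + B * ‖y‖) * t := by
            rw [hadef]
            field_simp
            try ring
          rw [haK]
          ring
  -- combine exponentials
  have hcomb : ∀ (c₁ c₂ : ℝ) (v : EuclideanSpace ℝ (Fin d)),
      matApply (exp (c₁ • A)) (matApply (exp (c₂ • A)) v) =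
        matApply (exp ((c₁ + c₂) • A)) v := by
    intro c₁ c₂ v
    simp only [matApply, WithLp.ofLp_toLp]
    have hsmul : (c₁ + c₂) • A = c₁ • A + c₂ • A := add_smul c₁ c₂ A
    rw [Matrix.mulVec_mulVec, hsmul, Matrix.exp_add_of_commute _ _
      (((Commute.refl A).smul_left c₁).smul_right c₂)]
  have hYcont : Continuous fun r =>
      matApply (exp ((W t - W r) • A)) (F (matApply (exp (W r • A)) y)) :=
    continuous_matApply_exp A (continuous_const.sub hW) (hFcont.comp hZcont)
  have hXcont : Continuous fun r => matApply (exp ((W t - W r) • A)) (F (φ r y)) :=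
    continuous_matApply_exp A (continuous_const.sub hW) (hFcont.comp (hφc y))
  have hJcont : Continuous fun s =>
      matApply (exp ((-W s) • A)) (F (matApply (exp (W s • A)) y)) :=
    continuous_matApply_exp A hW.neg (hFcont.comp hZcont)
  have hpull : matApply (exp (W t • A))
      (∫ s in (0:ℝ)..t, matApply (exp ((-W s) • A)) (F (matApply (exp (W s • A)) y)))
      = ∫ s in (0:ℝ)..t,
          matApply (exp ((W t - W s) • A)) (F (matApply (exp (W s • A)) y)) := by
    rw [matApply_eq_matCLM,
      ← ContinuousLinearMap.intervalIntegral_comp_comm _ (hJcont.intervalIntegrable 0 t)]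
    apply intervalIntegral.integral_congr
    intro s _
    beta_reduce
    rw [← matApply_eq_matCLM]
    have := hcomb (W t) (-W s) (F (matApply (exp (W s • A)) y))
    rw [this, ← sub_eq_add_neg]
  have hΔ : φ t y -
      (matApply (exp (W t • A)) y +
        ε • matApply (exp (W t • A))
          (∫ s in (0 : ℝ)..t,
            matApply (exp ((-W s) • A)) (F (matApply (exp (W s • A)) y)))) =
      ε • ∫ r in (0:ℝ)..t,
        (matApply (exp ((W t - W r) • A)) (F (φ r y)) -
          matApply (exp ((W t - W r) • A)) (F (matApply (exp (W r • A)) y))) := by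
    rw [hφeq t y ht, hpull,
      intervalIntegral.integral_sub (hXcont.intervalIntegrable 0 t)
        (hYcont.intervalIntegrable 0 t), smul_sub]
    abel
  have hdiff : ∀ r, ‖matApply (exp ((W t - W r) • A)) (F (φ r y)) -
      matApply (exp ((W t - W r) • A)) (F (matApply (exp (W r • A)) y))‖ ≤
      B * L₁ * g r := by
    intro r
    have hsub : matApply (exp ((W t - W r) • A)) (F (φ r y)) -
        matApply (exp ((W t - W r) • A)) (F (matApply (exp (W r • A)) y)) =
        matApply (exp ((W t - W r) • A)) (F (φ r y) - F (matApply (exp (W r • A)) y)) := by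
      exact ((matCLM (exp ((W t - W r) • A))).map_sub _ _).symm
    rw [hsub]
    calc ‖matApply (exp ((W t - W r) • A)) (F (φ r y) - F (matApply (exp (W r • A)) y))‖
        ≤ B * ‖F (φ r y) - F (matApply (exp (W r • A)) y)‖ := hB _ _
      _ ≤ B * (L₁ * ‖φ r y - matApply (exp (W r • A)) y‖) := by gcongr; exact hFlip' _ _
      _ = B * L₁ * g r := by rw [hgdef]; ring
  have hdcont : Continuous fun r => (matApply (exp ((W t - W r) • A)) (F (φ r y)) -
      matApply (exp ((W t - W r) • A)) (F (matApply (exp (W r • A)) y))) :=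
    hXcont.sub hYcont
  calc ‖φ t y -
      (matApply (exp (W t • A)) y +
        ε • matApply (exp (W t • A))
          (∫ s in (0 : ℝ)..t,
            matApply (exp ((-W s) • A)) (F (matApply (exp (W s • A)) y))))‖
      = ε * ‖∫ r in (0:ℝ)..t,
          (matApply (exp ((W t - W r) • A)) (F (φ r y)) -
            matApply (exp ((W t - W r) • A)) (F (matApply (exp (W r • A)) y)))‖ := by
        rw [hΔ, norm_smul, Real.norm_of_nonneg hε.le]
    _ ≤ ε * ∫ r in (0:ℝ)..t, ‖matApply (exp ((W t - W r) • A)) (F (φ r y)) -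
          matApply (exp ((W t - W r) • A)) (F (matApply (exp (W r • A)) y))‖ :=
        mul_le_mul_of_nonneg_left
          (intervalIntegral.norm_integral_le_integral_norm ht) hε.le
    _ ≤ ε * ∫ r in (0:ℝ)..t, B * L₁ * g r := by
        apply mul_le_mul_of_nonneg_left _ hε.le
        apply intervalIntegral.integral_mono_on ht (hdcont.norm.intervalIntegrable _ _)
          ((continuous_const.mul hgcont).intervalIntegrable _ _)
        intro r _
        exact hdiff r
    _ = ε * (B * L₁ * h t) := by rw [intervalIntegral.integral_const_mul]
    _ ≤ ε * (B * L₁ * ((1 + B * ‖y‖) * t * (Real.exp (K * t) - 1))) := by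
        apply mul_le_mul_of_nonneg_left _ hε.le
        apply mul_le_mul_of_nonneg_left _ (by positivity)
        exact hht
    _ ≤ ε * (B * L₁ * ((1 + B * ‖y‖) * t * (K * t * Real.exp (K * t)))) := by
        have hKt : (0:ℝ) ≤ K * t := by positivity
        apply mul_le_mul_of_nonneg_left _ hε.le
        apply mul_le_mul_of_nonneg_left _ (by positivity)
        apply mul_le_mul_of_nonneg_left _ (by positivity)
        exact exp_sub_one_le hKt
    _ = (B * L₁)^2 * (1 + B * ‖y‖) * Real.exp (K * t) * (ε * t)^2 := by
        rw [hKdef]; ring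
    _ ≤ ((B * L₁)^2 * (1 + B) + B * L₁) * (1 + ‖y‖) * Real.exp (((B * L₁)^2 * (1 + B) + B * L₁) * ε * t) * (ε * t)^2 := by
        have hny : (0:ℝ) ≤ ‖y‖ := norm_nonneg y
        have h1 : (B * L₁)^2 * (1 + B * ‖y‖) ≤ ((B * L₁)^2 * (1 + B) + B * L₁) * (1 + ‖y‖) := by
          nlinarith [mul_nonneg (sq_nonneg (B * L₁)) hB0.le,
            mul_nonneg (sq_nonneg (B * L₁)) hny, mul_nonneg (mul_pos hB0 hL₁).le hny]
        have h2 : Real.exp (K * t) ≤ Real.exp (((B * L₁)^2 * (1 + B) + B * L₁) * ε * t) := by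
          apply Real.exp_le_exp.mpr
          rw [hKdef]
          have hC : B * L₁ ≤ (B * L₁)^2 * (1 + B) + B * L₁ :=
            le_add_of_nonneg_left (by positivity)
          have het : (0:ℝ) ≤ ε * t := by positivity
          nlinarith [mul_le_mul_of_nonneg_right hC het]
        have hnn1 : (0:ℝ) ≤ (B * L₁)^2 * (1 + B * ‖y‖) := by positivity
        have hnn2 : (0:ℝ) ≤ (ε * t)^2 := by positivity
        have hnn3 : (0:ℝ) ≤ Real.exp (K * t) := (Real.exp_pos _).le
        calc (B * L₁)^2 * (1 + B * ‖y‖) * Real.exp (K * t) * (ε * t)^2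
            ≤ (((B * L₁)^2 * (1 + B) + B * L₁) * (1 + ‖y‖)) * Real.exp (K * t) * (ε * t)^2 := by
              gcongr
          _ ≤ (((B * L₁)^2 * (1 + B) + B * L₁) * (1 + ‖y‖)) *
              Real.exp (((B * L₁)^2 * (1 + B) + B * L₁) * ε * t) * (ε * t)^2 := by
              have hp : (0:ℝ) ≤ ((B * L₁)^2 * (1 + B) + B * L₁) * (1 + ‖y‖) := by positivity
              gcongr
          _ = ((B * L₁)^2 * (1 + B) + B * L₁) * (1 + ‖y‖) *
              Real.exp (((B * L₁)^2 * (1 + B) + B * L₁) * ε * t) * (ε * t)^2 := by ring
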